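/- Let Δ be a d-dimensional simplicial complex on n vertices with facets of dimension d given by F_1,...,F_s, over a field K, and let F = c_1 F_1 + ... + c_s F_s be a nonzero d-cycle, i.e., a nonzero element of the top simplicial homology H_d(Δ; K). Then the polynomial F_Δ = Σ_{i=1}^s c_i · x_{F_i} · V(F_i), where x_{F_i} = ∏_{j∈F_i} x_j and V(F_i) = ∏_{j<k, j,k∈F_i}(x_j − x_k), is annihilated under contraction by every generator of I_Δ and by every elementary symmetric polynomial e_1,...,e_{d+1}. In particular F_Δ is a nonzero element of the inverse system (I_Δ + (e_1,...,e_{d+1}))^{-1} in degree C(d+2,2). -/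

import Mathlib

open MvPolynomial

/-- Contraction action of `R` on `S` (identifying `y_j ↔ x_j`). -/
noncomputable def contract {K : Type*} [Field K] {n : ℕ}
    (f p : MvPolynomial (Fin n) K) : MvPolynomial (Fin n) K :=
  ∑ a ∈ f.support, f.coeff a • p.divMonomial a

/-- The coefficient of the (d−1)-face `τ` in the simplicial boundary of the facet `F`
(vertices ordered by the canonical order on `Fin n`): if `τ ⊆ F`, it is `(-1)^j` where
`j` is the position in `F` of the vertex removed, and `0` otherwise. -/
def bdryCoeff {n : ℕ} (F τ : Finset (Fin n)) : ℤ :=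
  if τ ⊆ F then ∑ v ∈ F \ τ, (-1) ^ ((F.filter fun w => w < v).card) else 0

/-- `x_F · V(F)`: the product of the variables in `F` times the Vandermonde determinant
on the variables indexed by `F`. -/
noncomputable def xFV {K : Type*} [Field K] {n : ℕ} (F : Finset (Fin n)) :
    MvPolynomial (Fin n) K :=
  (∏ j ∈ F, X j) * ∏ j ∈ F, ∏ k ∈ F.filter (fun k => j < k), (X j - X k)

section Aux

variable {K : Type*} [Field K] {n : ℕ}

/-- product of the variables of `F` -/
noncomputable def xP (F : Finset (Fin n)) : MvPolynomial (Fin n) K := ∏ j ∈ F, X j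

/-- the Vandermonde product on the variables of `F` -/
noncomputable def mV (F : Finset (Fin n)) : MvPolynomial (Fin n) K :=
  ∏ j ∈ F, ∏ k ∈ F.filter (fun k => j < k), (X j - X k)

/-- the elementary symmetric polynomial in the variables of `F` -/
noncomputable def eS (m : ℕ) (F : Finset (Fin n)) : MvPolynomial (Fin n) K :=
  ∑ S ∈ F.powersetCard m, ∏ j ∈ S, X j

/-- indicator function of a finset as a finsupp -/
noncomputable def ind {n : ℕ} (T : Finset (Fin n)) : Fin n →₀ ℕ := ∑ j ∈ T, Finsupp.single j 1

lemma xFV_eq (F : Finset (Fin n)) : (xFV F : MvPolynomial (Fin n) K) = xP F * mV F := rfl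

lemma ind_apply (T : Finset (Fin n)) (v : Fin n) : ind T v = if v ∈ T then 1 else 0 := by
  classical
  rw [ind, Finsupp.finset_sum_apply]
  simp [Finsupp.single_apply]

lemma xP_eq_monomial (F : Finset (Fin n)) :
    (xP F : MvPolynomial (Fin n) K) = monomial (ind F) 1 := by
  rw [xP, ind, monomial_sum_one]
  rfl

lemma eS_zero (F : Finset (Fin n)) : (eS 0 F : MvPolynomial (Fin n) K) = 1 := by
  simp [eS]

lemma contract_eq_sum_subset {f : MvPolynomial (Fin n) K} {s : Finset ((Fin n) →₀ ℕ)}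
    (h : f.support ⊆ s) (p : MvPolynomial (Fin n) K) :
    contract f p = ∑ a ∈ s, f.coeff a • p.divMonomial a := by
  refine Finset.sum_subset h fun a _ ha => ?_
  rw [notMem_support_iff.1 ha, zero_smul]

lemma contract_add_left (f g p : MvPolynomial (Fin n) K) :
    contract (f + g) p = contract f p + contract g p := by
  classical
  rw [contract_eq_sum_subset (s := f.support ∪ g.support) (support_add),
    contract_eq_sum_subset (s := f.support ∪ g.support) Finset.subset_union_left,
    contract_eq_sum_subset (s := f.support ∪ g.support) Finset.subset_union_right,
    ← Finset.sum_add_distrib]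
  simp [coeff_add, add_smul]

lemma contract_zero_left (p : MvPolynomial (Fin n) K) : contract 0 p = 0 := by
  simp [contract]

lemma contract_sum_left {ι : Type*} (s : Finset ι) (f : ι → MvPolynomial (Fin n) K)
    (p : MvPolynomial (Fin n) K) :
    contract (∑ i ∈ s, f i) p = ∑ i ∈ s, contract (f i) p := by
  classical
  induction s using Finset.induction with
  | empty => simp [contract_zero_left]
  | insert _ _ h ih => rw [Finset.sum_insert h, contract_add_left, ih, Finset.sum_insert h]

lemma contract_monomial (a : Fin n →₀ ℕ) (p : MvPolynomial (Fin n) K) :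
    contract (monomial a 1) p = p.divMonomial a := by
  classical
  rw [contract, support_monomial, if_neg (one_ne_zero)]
  simp [coeff_monomial]

lemma smul_divMonomial (c : K) (p : MvPolynomial (Fin n) K) (a : Fin n →₀ ℕ) :
    (c • p).divMonomial a = c • p.divMonomial a := by
  ext m
  simp [coeff_divMonomial, coeff_smul]

lemma contract_smul_right (f : MvPolynomial (Fin n) K) (c : K) (p : MvPolynomial (Fin n) K) :
    contract f (c • p) = c • contract f p := by
  rw [contract, contract, Finset.smul_sum]
  refine Finset.sum_congr rfl fun a _ => ?_
  rw [smul_divMonomial, smul_comm]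

lemma contract_sum_right {ι : Type*} (f : MvPolynomial (Fin n) K) (s : Finset ι)
    (p : ι → MvPolynomial (Fin n) K) :
    contract f (∑ i ∈ s, p i) = ∑ i ∈ s, contract f (p i) := by
  classical
  have hdiv : ∀ a : Fin n →₀ ℕ, (∑ i ∈ s, p i).divMonomial a = ∑ i ∈ s, (p i).divMonomial a := by
    intro a; ext m; simp [coeff_divMonomial, coeff_sum]
  simp only [contract, hdiv, Finset.smul_sum]
  exact Finset.sum_comm


lemma vars_mV (F : Finset (Fin n)) : (mV F : MvPolynomial (Fin n) K).vars ⊆ F := by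
  classical
  refine (vars_prod _).trans ?_
  intro v hv
  rw [Finset.mem_biUnion] at hv
  obtain ⟨j, hj, hv⟩ := hv
  have := (vars_prod (s := F.filter fun k => j < k)
      (f := fun k => (X j - X k : MvPolynomial (Fin n) K))) hv
  rw [Finset.mem_biUnion] at this
  obtain ⟨k, hk, hv2⟩ := this
  have h1 : (X j - X k : MvPolynomial (Fin n) K).vars ⊆ {j} ∪ {k} := by
    refine (sub_eq_add_neg (X j : MvPolynomial (Fin n) K) (X k) ▸
      (vars_add_subset _ _)).trans ?_
    rw [vars_neg, vars_X, vars_X]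
  rcases Finset.mem_union.1 (h1 hv2) with h | h
  · rwa [Finset.mem_singleton.1 h]
  · rw [Finset.mem_singleton.1 h]; exact (Finset.mem_filter.1 hk).1

lemma support_xPmV {F : Finset (Fin n)} {m : Fin n →₀ ℕ}
    (hm : coeff m (xP F * mV F : MvPolynomial (Fin n) K) ≠ 0) (v : Fin n) :
    v ∈ F ↔ 1 ≤ m v := by
  classical
  constructor
  · intro hv
    rw [xP_eq_monomial, coeff_monomial_mul'] at hm
    by_cases hle : ind F ≤ m
    · have := hle v
      rwa [ind_apply, if_pos hv] at this
    · rw [if_neg hle] at hm; exact absurd rfl hm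
  · intro hv
    have hvm : v ∈ m.support := Finsupp.mem_support_iff.2 (by omega)
    have hvvars : v ∈ (xP F * mV F : MvPolynomial (Fin n) K).vars :=
      (mem_vars v).2 ⟨m, mem_support_iff.2 hm, hvm⟩
    have : (xP F * mV F : MvPolynomial (Fin n) K).vars ⊆ F := by
      refine (vars_mul _ _).trans (Finset.union_subset ?_ (vars_mV F))
      refine (vars_prod _).trans ?_
      intro w hw
      rw [Finset.mem_biUnion] at hw
      obtain ⟨j, hj, hw⟩ := hw
      rw [vars_X, Finset.mem_singleton] at hw
      rwa [hw]
    exact this hvvars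

lemma divMonomial_not_subset {T F : Finset (Fin n)} (h : ¬ T ⊆ F) :
    (xP F * mV F : MvPolynomial (Fin n) K).divMonomial (ind T) = 0 := by
  classical
  ext m
  rw [coeff_divMonomial, coeff_zero]
  by_contra hc
  obtain ⟨v, hvT, hvF⟩ := Finset.not_subset.1 h
  have h1 : 1 ≤ (ind T + m) v := by
    have : ind T v = 1 := by rw [ind_apply, if_pos hvT]
    simp [this]
  exact hvF ((support_xPmV hc v).2 h1)

lemma divMonomial_subset {T F : Finset (Fin n)} (h : T ⊆ F) :
    (xP F * mV F : MvPolynomial (Fin n) K).divMonomial (ind T) = xP (F \ T) * mV F := by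
  classical
  have hx : (xP F : MvPolynomial (Fin n) K) = xP (F \ T) * xP T := by
    rw [xP, xP, xP, Finset.prod_sdiff h]
  rw [hx, xP_eq_monomial T, mul_comm (xP (F \ T) : MvPolynomial (Fin n) K) _, mul_assoc,
    divMonomial_monomial_mul]

lemma eS_erase {F : Finset (Fin n)} {v : Fin n} (hv : v ∈ F) (m : ℕ) :
    (eS (m + 1) F : MvPolynomial (Fin n) K)
      = eS (m + 1) (F.erase v) + X v * eS m (F.erase v) := by
  classical
  conv_lhs => rw [eS, ← Finset.insert_erase hv,
    Finset.powersetCard_succ_insert (Finset.notMem_erase v F)]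
  rw [Finset.sum_union, Finset.sum_image]
  · congr 1
    rw [eS, Finset.mul_sum]
    refine Finset.sum_congr rfl fun S hS => ?_
    have hvS : v ∉ S := fun hvS =>
      (Finset.notMem_erase v F) ((Finset.mem_powersetCard.1 hS).1 hvS)
    rw [Finset.prod_insert hvS]
  · intro S hS S' hS' hSS
    have hvS : v ∉ S := fun h =>
      (Finset.notMem_erase v F) ((Finset.mem_powersetCard.1 hS).1 h)
    have hvS' : v ∉ S' := fun h =>
      (Finset.notMem_erase v F) ((Finset.mem_powersetCard.1 hS').1 h)
    rw [← Finset.erase_insert hvS, ← Finset.erase_insert hvS', hSS]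
  · rw [Finset.disjoint_right]
    intro S hS hS2
    rw [Finset.mem_image] at hS
    obtain ⟨S', hS', rfl⟩ := hS
    exact (Finset.notMem_erase v F)
      ((Finset.mem_powersetCard.1 hS2).1 (Finset.mem_insert_self v S'))


lemma neg_one_pow_cancel {R : Type*} [CommRing R] (a : ℕ) {x y : R}
    (h : (-1) ^ a * x = (-1) ^ a * y) : x = y := by
  have h2 := congrArg (fun z => (-1 : R) ^ a * z) h
  simpa [← mul_assoc, ← pow_add, Even.neg_one_pow (⟨a, rfl⟩ : Even (a + a))] using h2

lemma image_orderEmbOfFin {c : ℕ} (F : Finset (Fin n)) (hF : F.card = c) :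
    Finset.image (F.orderEmbOfFin hF) Finset.univ = F := by
  apply Finset.coe_injective
  rw [Finset.coe_image, Finset.coe_univ, Set.image_univ, Finset.range_orderEmbOfFin]

lemma prod_emb {c : ℕ} (F : Finset (Fin n)) (hF : F.card = c) {M : Type*} [CommMonoid M]
    (g : Fin n → M) : ∏ v ∈ F, g v = ∏ i : Fin c, g (F.orderEmbOfFin hF i) := by
  conv_lhs => rw [← image_orderEmbOfFin F hF]
  rw [Finset.prod_image]
  intro a _ b _ h
  exact (F.orderEmbOfFin hF).injective h

lemma sum_emb {c : ℕ} (F : Finset (Fin n)) (hF : F.card = c) {M : Type*} [AddCommMonoid M]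
    (g : Fin n → M) : ∑ v ∈ F, g v = ∑ i : Fin c, g (F.orderEmbOfFin hF i) := by
  conv_lhs => rw [← image_orderEmbOfFin F hF]
  rw [Finset.sum_image]
  intro a _ b _ h
  exact (F.orderEmbOfFin hF).injective h

lemma filter_lt_emb {c : ℕ} (F : Finset (Fin n)) (hF : F.card = c) (i : Fin c) :
    F.filter (fun k => F.orderEmbOfFin hF i < k)
      = (Finset.Ioi i).image (F.orderEmbOfFin hF) := by
  ext k
  simp only [Finset.mem_filter, Finset.mem_image, Finset.mem_Ioi]
  constructor
  · rintro ⟨hkF, hlt⟩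
    have : k ∈ Set.range (F.orderEmbOfFin hF) := by
      rw [Finset.range_orderEmbOfFin]; exact hkF
    obtain ⟨j, rfl⟩ := this
    exact ⟨j, (OrderEmbedding.lt_iff_lt _).1 hlt, rfl⟩
  · rintro ⟨j, hj, rfl⟩
    exact ⟨Finset.orderEmbOfFin_mem F hF j, (OrderEmbedding.lt_iff_lt _).2 hj⟩

lemma filter_gt_emb {c : ℕ} (F : Finset (Fin n)) (hF : F.card = c) (i : Fin c) :
    F.filter (fun k => k < F.orderEmbOfFin hF i)
      = (Finset.Iio i).image (F.orderEmbOfFin hF) := by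
  ext k
  simp only [Finset.mem_filter, Finset.mem_image, Finset.mem_Iio]
  constructor
  · rintro ⟨hkF, hlt⟩
    have : k ∈ Set.range (F.orderEmbOfFin hF) := by
      rw [Finset.range_orderEmbOfFin]; exact hkF
    obtain ⟨j, rfl⟩ := this
    exact ⟨j, (OrderEmbedding.lt_iff_lt _).1 hlt, rfl⟩
  · rintro ⟨j, hj, rfl⟩
    exact ⟨Finset.orderEmbOfFin_mem F hF j, (OrderEmbedding.lt_iff_lt _).2 hj⟩

lemma pos_emb {c : ℕ} (F : Finset (Fin n)) (hF : F.card = c) (i : Fin c) :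
    (F.filter (fun k => k < F.orderEmbOfFin hF i)).card = (i : ℕ) := by
  rw [filter_gt_emb F hF i,
    Finset.card_image_of_injective _ (F.orderEmbOfFin hF).injective, Fin.card_Iio]

lemma mV_emb {c : ℕ} (F : Finset (Fin n)) (hF : F.card = c) :
    (mV F : MvPolynomial (Fin n) K) = ∏ i : Fin c, ∏ j ∈ Finset.Ioi i,
      (X (F.orderEmbOfFin hF i) - X (F.orderEmbOfFin hF j)) := by
  rw [mV, prod_emb F hF]
  refine Finset.prod_congr rfl fun i _ => ?_
  rw [filter_lt_emb F hF i, Finset.prod_image]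
  intro a _ b _ h
  exact (F.orderEmbOfFin hF).injective h

lemma sum_card_Ioi (c : ℕ) : ∑ i : Fin c, (Finset.Ioi i).card = c.choose 2 := by
  have h1 : ∀ i : Fin c, (Finset.Ioi i).card = c - 1 - (i : ℕ) := fun i => Fin.card_Ioi i
  simp only [h1]
  rw [Fin.sum_univ_eq_sum_range (fun i => c - 1 - i) c,
    Finset.sum_range_reflect (fun i => i) c, Finset.sum_range_id, Nat.choose_two_right]

lemma det_vandermonde_emb {c : ℕ} (F : Finset (Fin n)) (hF : F.card = c) :
    Matrix.det (Matrix.vandermonde fun i : Fin c => (X (F.orderEmbOfFin hF i) :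
        MvPolynomial (Fin n) K))
      = (-1) ^ (c.choose 2) * mV F := by
  rw [Matrix.det_vandermonde, mV_emb F hF, ← sum_card_Ioi c,
    ← Finset.prod_pow_eq_pow_sum, ← Finset.prod_mul_distrib]
  refine Finset.prod_congr rfl fun i _ => ?_
  rw [← Finset.prod_const, ← Finset.prod_mul_distrib]
  refine Finset.prod_congr rfl fun j _ => ?_
  ring

lemma orderEmbOfFin_erase {c : ℕ} (F : Finset (Fin n)) (hF : F.card = c + 1) (i : Fin (c + 1))
    (h' : (F.erase (F.orderEmbOfFin hF i)).card = c) (a : Fin c) :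
    (F.erase (F.orderEmbOfFin hF i)).orderEmbOfFin h' a
      = F.orderEmbOfFin hF (i.succAbove a) := by
  have hmem : ∀ b : Fin c, F.orderEmbOfFin hF (i.succAbove b) ∈ F.erase (F.orderEmbOfFin hF i) := by
    intro b
    refine Finset.mem_erase.2 ⟨fun h => ?_, Finset.orderEmbOfFin_mem F hF _⟩
    exact Fin.succAbove_ne i b ((F.orderEmbOfFin hF).injective h)
  have hmono : StrictMono fun b : Fin c => F.orderEmbOfFin hF (i.succAbove b) :=
    (F.orderEmbOfFin hF).strictMono.comp (Fin.strictMono_succAbove i)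
  have := Finset.orderEmbOfFin_unique h' hmem hmono
  exact (congrFun this a).symm

lemma card_erase_emb {c : ℕ} (F : Finset (Fin n)) (hF : F.card = c + 1) (i : Fin (c + 1)) :
    (F.erase (F.orderEmbOfFin hF i)).card = c := by
  rw [Finset.card_erase_of_mem (Finset.orderEmbOfFin_mem F hF i), hF]
  omega

lemma det_vandermonde_erase {c : ℕ} (F : Finset (Fin n)) (hF : F.card = c + 1) (i : Fin (c + 1)) :
    Matrix.det (Matrix.vandermonde fun a : Fin c =>
        (X (F.orderEmbOfFin hF (i.succAbove a)) : MvPolynomial (Fin n) K))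
      = (-1) ^ (c.choose 2) * mV (F.erase (F.orderEmbOfFin hF i)) := by
  have hemb : (fun a : Fin c => (X (F.orderEmbOfFin hF (i.succAbove a)) :
      MvPolynomial (Fin n) K))
      = fun a => X ((F.erase (F.orderEmbOfFin hF i)).orderEmbOfFin (card_erase_emb F hF i) a) := by
    funext a
    rw [orderEmbOfFin_erase F hF i (card_erase_emb F hF i) a]
  rw [hemb, det_vandermonde_emb (F.erase (F.orderEmbOfFin hF i)) (card_erase_emb F hF i)]

lemma detP0 {c : ℕ} (F : Finset (Fin n)) (hF : F.card = c + 1) :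
    ∑ i : Fin (c + 1), (-1 : MvPolynomial (Fin n) K) ^ (i : ℕ) *
        (xP (F.erase (F.orderEmbOfFin hF i)) * mV (F.erase (F.orderEmbOfFin hF i)))
      = (-1) ^ c * mV F := by
  classical
  have key := Matrix.det_succ_column_zero
    (Matrix.vandermonde fun i : Fin (c + 1) => (X (F.orderEmbOfFin hF i) : MvPolynomial (Fin n) K))
  rw [det_vandermonde_emb F hF] at key
  have hterm : ∀ i : Fin (c + 1),
      Matrix.det ((Matrix.vandermonde fun i : Fin (c + 1) =>
          (X (F.orderEmbOfFin hF i) : MvPolynomial (Fin n) K)).submatrix i.succAbove Fin.succ)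
        = xP (F.erase (F.orderEmbOfFin hF i)) *
            ((-1) ^ (c.choose 2) * mV (F.erase (F.orderEmbOfFin hF i))) := by
    intro i
    have hsub : ((Matrix.vandermonde fun i : Fin (c + 1) =>
        (X (F.orderEmbOfFin hF i) : MvPolynomial (Fin n) K)).submatrix i.succAbove Fin.succ)
        = Matrix.of fun a b => (X (F.orderEmbOfFin hF (i.succAbove a)) : MvPolynomial (Fin n) K) *
            Matrix.vandermonde (fun a : Fin c =>
              (X (F.orderEmbOfFin hF (i.succAbove a)) : MvPolynomial (Fin n) K)) a b := by
      ext a b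
      simp only [Matrix.submatrix_apply, Matrix.vandermonde_apply, Matrix.of_apply, Fin.val_succ]
      rw [pow_succ']
    rw [hsub, Matrix.det_mul_column, det_vandermonde_erase F hF i]
    congr 1
    rw [xP, prod_emb (F.erase (F.orderEmbOfFin hF i)) (card_erase_emb F hF i)]
    refine Finset.prod_congr rfl fun a _ => ?_
    rw [orderEmbOfFin_erase F hF i (card_erase_emb F hF i) a]
  simp only [hterm, Matrix.vandermonde_apply, Fin.val_zero, pow_zero, mul_one] at key
  have hch : (c + 1).choose 2 = c.choose 2 + c := by
    rw [Nat.choose_succ_succ, Nat.choose_one_right, Nat.add_comm]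
  apply neg_one_pow_cancel (c.choose 2)
  rw [Finset.mul_sum]
  calc ∑ i : Fin (c+1), (-1 : MvPolynomial (Fin n) K) ^ (c.choose 2) *
          ((-1) ^ (i : ℕ) * (xP (F.erase (F.orderEmbOfFin hF i)) * mV (F.erase (F.orderEmbOfFin hF i))))
      = ∑ i : Fin (c+1), (-1 : MvPolynomial (Fin n) K) ^ (i : ℕ) *
          (xP (F.erase (F.orderEmbOfFin hF i)) *
            ((-1) ^ (c.choose 2) * mV (F.erase (F.orderEmbOfFin hF i)))) := by
        refine Finset.sum_congr rfl fun i _ => by ring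
    _ = (-1) ^ ((c+1).choose 2) * mV F := key.symm
    _ = (-1 : MvPolynomial (Fin n) K) ^ (c.choose 2) * ((-1) ^ c * mV F) := by
        rw [hch, pow_add, mul_assoc]

lemma detP1 {c : ℕ} (F : Finset (Fin n)) (hF : F.card = c + 1) (r : ℕ) (hr : r + 1 ≤ c) :
    ∑ i : Fin (c + 1), (-1 : MvPolynomial (Fin n) K) ^ (i : ℕ) *
        ((X (F.orderEmbOfFin hF i)) ^ r * mV (F.erase (F.orderEmbOfFin hF i)))
      = 0 := by
  classical
  set M : Matrix (Fin (c + 1)) (Fin (c + 1)) (MvPolynomial (Fin n) K) :=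
    Matrix.of fun i j => (X (F.orderEmbOfFin hF i) : MvPolynomial (Fin n) K) ^
      (if j = 0 then r else (j : ℕ) - 1) with hM
  have hr1 : r + 1 < c + 1 := by omega
  have hne : ((⟨r + 1, hr1⟩ : Fin (c + 1)) = 0) → False := by
    intro h
    have := congrArg Fin.val h
    simp at this
  have hdet : M.det = 0 := by
    refine Matrix.det_zero_of_column_eq (i := (0 : Fin (c+1))) (j := ⟨r + 1, hr1⟩)
      (fun h => hne h.symm) fun k => ?_
    simp only [hM, Matrix.of_apply]
    rw [if_neg hne]
    norm_num
  have key := Matrix.det_succ_column_zero M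
  rw [hdet] at key
  have hterm : ∀ i : Fin (c + 1),
      Matrix.det (M.submatrix i.succAbove Fin.succ)
        = (-1) ^ (c.choose 2) * mV (F.erase (F.orderEmbOfFin hF i)) := by
    intro i
    have hsub : M.submatrix i.succAbove Fin.succ
        = Matrix.vandermonde (fun a : Fin c =>
            (X (F.orderEmbOfFin hF (i.succAbove a)) : MvPolynomial (Fin n) K)) := by
      ext a b
      simp only [hM, Matrix.submatrix_apply, Matrix.of_apply, Matrix.vandermonde_apply]
      rw [if_neg (Fin.succ_ne_zero b), Fin.val_succ]
      simp
    rw [hsub, det_vandermonde_erase F hF i]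
  have hM0 : ∀ i : Fin (c + 1), M i 0 = (X (F.orderEmbOfFin hF i) : MvPolynomial (Fin n) K) ^ r := by
    intro i
    simp only [hM, Matrix.of_apply]
    norm_num
  simp only [hterm, hM0] at key
  apply neg_one_pow_cancel (c.choose 2)
  rw [mul_zero, Finset.mul_sum]
  calc ∑ i : Fin (c+1), (-1 : MvPolynomial (Fin n) K) ^ (c.choose 2) *
          ((-1) ^ (i : ℕ) * ((X (F.orderEmbOfFin hF i)) ^ r * mV (F.erase (F.orderEmbOfFin hF i))))
      = ∑ i : Fin (c+1), (-1 : MvPolynomial (Fin n) K) ^ (i : ℕ) *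
          ((X (F.orderEmbOfFin hF i)) ^ r *
            ((-1) ^ (c.choose 2) * mV (F.erase (F.orderEmbOfFin hF i)))) := by
        refine Finset.sum_congr rfl fun i _ => by ring
    _ = ∑ i : Fin (c+1), (-1 : MvPolynomial (Fin n) K) ^ (i : ℕ) *
          (X (F.orderEmbOfFin hF i)) ^ r *
            ((-1) ^ (c.choose 2) * mV (F.erase (F.orderEmbOfFin hF i))) := by
        refine Finset.sum_congr rfl fun i _ => by ring
    _ = 0 := key.symm


lemma detT {c : ℕ} (F : Finset (Fin n)) (hF : F.card = c + 1) (m r : ℕ)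
    (hmr : m + r + 1 ≤ c) :
    ∑ i : Fin (c + 1), (-1 : MvPolynomial (Fin n) K) ^ (i : ℕ) *
        ((X (F.orderEmbOfFin hF i)) ^ r *
          (eS m (F.erase (F.orderEmbOfFin hF i)) * mV (F.erase (F.orderEmbOfFin hF i))))
      = 0 := by
  induction m generalizing r with
  | zero =>
    have h := detP1 (K := K) F hF r (by omega)
    calc ∑ i : Fin (c + 1), (-1 : MvPolynomial (Fin n) K) ^ (i : ℕ) *
            ((X (F.orderEmbOfFin hF i)) ^ r *
              (eS 0 (F.erase (F.orderEmbOfFin hF i)) * mV (F.erase (F.orderEmbOfFin hF i))))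
        = ∑ i : Fin (c + 1), (-1 : MvPolynomial (Fin n) K) ^ (i : ℕ) *
            ((X (F.orderEmbOfFin hF i)) ^ r * mV (F.erase (F.orderEmbOfFin hF i))) := by
          refine Finset.sum_congr rfl fun i _ => ?_
          rw [eS_zero, one_mul]
      _ = 0 := h
  | succ m ih =>
    have hsplit : ∀ i : Fin (c + 1),
        (eS (m + 1) (F.erase (F.orderEmbOfFin hF i)) : MvPolynomial (Fin n) K)
          = eS (m + 1) F - X (F.orderEmbOfFin hF i) * eS m (F.erase (F.orderEmbOfFin hF i)) := by
      intro i
      rw [eS_erase (Finset.orderEmbOfFin_mem F hF i) m]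
      ring
    calc ∑ i : Fin (c + 1), (-1 : MvPolynomial (Fin n) K) ^ (i : ℕ) *
            ((X (F.orderEmbOfFin hF i)) ^ r *
              (eS (m + 1) (F.erase (F.orderEmbOfFin hF i)) * mV (F.erase (F.orderEmbOfFin hF i))))
        = ∑ i : Fin (c + 1),
            (eS (m + 1) F * ((-1 : MvPolynomial (Fin n) K) ^ (i : ℕ) *
              ((X (F.orderEmbOfFin hF i)) ^ r * mV (F.erase (F.orderEmbOfFin hF i))))
            - (-1 : MvPolynomial (Fin n) K) ^ (i : ℕ) *
              ((X (F.orderEmbOfFin hF i)) ^ (r + 1) *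
                (eS m (F.erase (F.orderEmbOfFin hF i)) * mV (F.erase (F.orderEmbOfFin hF i))))) := by
          refine Finset.sum_congr rfl fun i _ => ?_
          rw [hsplit i, pow_succ]
          ring
      _ = eS (m + 1) F * (∑ i : Fin (c + 1), (-1 : MvPolynomial (Fin n) K) ^ (i : ℕ) *
            ((X (F.orderEmbOfFin hF i)) ^ r * mV (F.erase (F.orderEmbOfFin hF i))))
          - ∑ i : Fin (c + 1), (-1 : MvPolynomial (Fin n) K) ^ (i : ℕ) *
            ((X (F.orderEmbOfFin hF i)) ^ (r + 1) *
              (eS m (F.erase (F.orderEmbOfFin hF i)) * mV (F.erase (F.orderEmbOfFin hF i)))) := by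
          rw [Finset.sum_sub_distrib, Finset.mul_sum]
      _ = 0 := by
          rw [detP1 F hF r (by omega), ih (r + 1) (by omega), mul_zero, sub_zero]

lemma detII {c : ℕ} (F : Finset (Fin n)) (hF : F.card = c + 1) (m : ℕ) (hm : m ≤ c) :
    ∑ i : Fin (c + 1), (-1 : MvPolynomial (Fin n) K) ^ (i : ℕ) *
        (xP (F.erase (F.orderEmbOfFin hF i)) *
          (eS m (F.erase (F.orderEmbOfFin hF i)) * mV (F.erase (F.orderEmbOfFin hF i))))
      = (-1) ^ c * (eS m F * mV F) := by
  cases m with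
  | zero =>
    have h := detP0 (K := K) F hF
    calc ∑ i : Fin (c + 1), (-1 : MvPolynomial (Fin n) K) ^ (i : ℕ) *
            (xP (F.erase (F.orderEmbOfFin hF i)) *
              (eS 0 (F.erase (F.orderEmbOfFin hF i)) * mV (F.erase (F.orderEmbOfFin hF i))))
        = ∑ i : Fin (c + 1), (-1 : MvPolynomial (Fin n) K) ^ (i : ℕ) *
            (xP (F.erase (F.orderEmbOfFin hF i)) * mV (F.erase (F.orderEmbOfFin hF i))) := by
          refine Finset.sum_congr rfl fun i _ => ?_
          rw [eS_zero, one_mul]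
      _ = (-1) ^ c * mV F := h
      _ = (-1) ^ c * (eS 0 F * mV F) := by rw [eS_zero, one_mul]
  | succ m =>
    have hsplit : ∀ i : Fin (c + 1),
        (eS (m + 1) (F.erase (F.orderEmbOfFin hF i)) : MvPolynomial (Fin n) K)
          = eS (m + 1) F - X (F.orderEmbOfFin hF i) * eS m (F.erase (F.orderEmbOfFin hF i)) := by
      intro i
      rw [eS_erase (Finset.orderEmbOfFin_mem F hF i) m]
      ring
    have hxPF : ∀ i : Fin (c + 1),
        (X (F.orderEmbOfFin hF i) : MvPolynomial (Fin n) K) *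
            xP (F.erase (F.orderEmbOfFin hF i)) = xP F := fun i =>
      Finset.mul_prod_erase F _ (Finset.orderEmbOfFin_mem F hF i)
    calc ∑ i : Fin (c + 1), (-1 : MvPolynomial (Fin n) K) ^ (i : ℕ) *
            (xP (F.erase (F.orderEmbOfFin hF i)) *
              (eS (m + 1) (F.erase (F.orderEmbOfFin hF i)) * mV (F.erase (F.orderEmbOfFin hF i))))
        = ∑ i : Fin (c + 1),
            (eS (m + 1) F * ((-1 : MvPolynomial (Fin n) K) ^ (i : ℕ) *
              (xP (F.erase (F.orderEmbOfFin hF i)) * mV (F.erase (F.orderEmbOfFin hF i))))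
            - xP F * ((-1 : MvPolynomial (Fin n) K) ^ (i : ℕ) *
              ((X (F.orderEmbOfFin hF i)) ^ 0 *
                (eS m (F.erase (F.orderEmbOfFin hF i)) * mV (F.erase (F.orderEmbOfFin hF i)))))) := by
          refine Finset.sum_congr rfl fun i _ => ?_
          rw [hsplit i, ← hxPF i, pow_zero]
          ring
      _ = eS (m + 1) F * (∑ i : Fin (c + 1), (-1 : MvPolynomial (Fin n) K) ^ (i : ℕ) *
            (xP (F.erase (F.orderEmbOfFin hF i)) * mV (F.erase (F.orderEmbOfFin hF i))))
          - xP F * ∑ i : Fin (c + 1), (-1 : MvPolynomial (Fin n) K) ^ (i : ℕ) *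
            ((X (F.orderEmbOfFin hF i)) ^ 0 *
              (eS m (F.erase (F.orderEmbOfFin hF i)) * mV (F.erase (F.orderEmbOfFin hF i)))) := by
          rw [Finset.sum_sub_distrib, Finset.mul_sum, Finset.mul_sum]
      _ = (-1) ^ c * (eS (m + 1) F * mV F) := by
          rw [detP0 F hF, detT F hF m 0 (by omega), mul_zero, sub_zero]
          ring

lemma contract_esymm_xPmV {F : Finset (Fin n)} {cc k : ℕ} (hF : F.card = cc) (hk1 : 1 ≤ k)
    (hkc : k ≤ cc) :
    contract (esymm (Fin n) K k) (xP F * mV F) = eS (cc - k) F * mV F := by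
  classical
  rw [esymm_eq_sum_monomial, contract_sum_left]
  have h1 : ∀ T ∈ Finset.univ.powersetCard k,
      contract (monomial (∑ i ∈ T, Finsupp.single i 1) (1 : K)) (xP F * mV F)
        = (xP F * mV F : MvPolynomial (Fin n) K).divMonomial (ind T) := fun T _ =>
    contract_monomial _ _
  rw [Finset.sum_congr rfl h1]
  rw [← Finset.sum_subset (s₁ := F.powersetCard k)
      (fun T hT => Finset.mem_powersetCard.2 ⟨Finset.subset_univ T,
        (Finset.mem_powersetCard.1 hT).2⟩)
      (fun T hT hT2 => divMonomial_not_subset fun hsub =>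
        hT2 (Finset.mem_powersetCard.2 ⟨hsub, (Finset.mem_powersetCard.1 hT).2⟩))]
  rw [Finset.sum_congr rfl (fun T hT =>
    divMonomial_subset (Finset.mem_powersetCard.1 hT).1)]
  rw [eS, Finset.sum_mul]
  refine Finset.sum_nbij' (i := fun T => F \ T) (j := fun S => F \ S) ?_ ?_ ?_ ?_ ?_
  · intro T hT
    obtain ⟨hsub, hcard⟩ := Finset.mem_powersetCard.1 hT
    exact Finset.mem_powersetCard.2 ⟨Finset.sdiff_subset, by rw [Finset.card_sdiff_of_subset hsub, hF, hcard]⟩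
  · intro S hS
    obtain ⟨hsub, hcard⟩ := Finset.mem_powersetCard.1 hS
    refine Finset.mem_powersetCard.2 ⟨Finset.sdiff_subset, ?_⟩
    rw [Finset.card_sdiff_of_subset hsub, hF, hcard]
    omega
  · intro T hT
    exact Finset.sdiff_sdiff_eq_self (Finset.mem_powersetCard.1 hT).1
  · intro S hS
    exact Finset.sdiff_sdiff_eq_self (Finset.mem_powersetCard.1 hS).1
  · intro T hT
    rfl

lemma sum_erase_emb {c : ℕ} (F : Finset (Fin n)) (hF : F.card = c)
    (Φ : Finset (Fin n) → MvPolynomial (Fin n) K) :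
    ∑ v ∈ F, (-1 : MvPolynomial (Fin n) K) ^ ((F.filter fun w => w < v).card) * Φ (F.erase v)
      = ∑ i : Fin c, (-1 : MvPolynomial (Fin n) K) ^ (i : ℕ) *
          Φ (F.erase (F.orderEmbOfFin hF i)) := by
  rw [sum_emb F hF]
  refine Finset.sum_congr rfl fun i _ => ?_
  rw [pos_emb F hF i]

lemma sum_bdry {F : Finset (Fin n)} {d : ℕ} (hF : F.card = d + 1)
    (Φ : Finset (Fin n) → MvPolynomial (Fin n) K) :
    ∑ τ ∈ Finset.univ.powersetCard d, ((bdryCoeff F τ : ℤ) : K) • Φ τ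
      = ∑ v ∈ F, (-1 : MvPolynomial (Fin n) K) ^ ((F.filter fun w => w < v).card) *
          Φ (F.erase v) := by
  classical
  rw [← Finset.sum_subset (s₁ := F.powersetCard d)
      (fun τ hτ => Finset.mem_powersetCard.2 ⟨Finset.subset_univ τ,
        (Finset.mem_powersetCard.1 hτ).2⟩)
      (fun τ hτ hτ2 => ?_)]
  · refine (Finset.sum_bij (i := fun v _ => F.erase v) ?_ ?_ ?_ ?_).symm
    · intro v hv
      refine Finset.mem_powersetCard.2 ⟨Finset.erase_subset _ _, ?_⟩
      rw [Finset.card_erase_of_mem hv, hF]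
      omega
    · intro v hv v' hv' hvv
      exact Finset.erase_injOn F hv hv' hvv
    · intro τ hτ
      obtain ⟨hsub, hcard⟩ := Finset.mem_powersetCard.1 hτ
      have hne : ¬ F ⊆ τ := fun h => by
        have := Finset.card_le_card h
        omega
      obtain ⟨v, hvF, hvτ⟩ := Finset.not_subset.1 hne
      refine ⟨v, hvF, ?_⟩
      refine (Finset.eq_of_subset_of_card_le (Finset.subset_erase.2 ⟨hsub, hvτ⟩) ?_).symm
      rw [Finset.card_erase_of_mem hvF, hF, hcard]
      omega
    · intro v hv
      have hsd : F \ F.erase v = {v} := Finset.sdiff_erase_self hv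
      rw [bdryCoeff, if_pos (Finset.erase_subset _ _), hsd, Finset.sum_singleton]
      rw [smul_eq_C_mul]
      push_cast
      rw [map_pow, map_neg, map_one]
  · rw [bdryCoeff, if_neg, Int.cast_zero, zero_smul]
    intro hsub
    exact hτ2 (Finset.mem_powersetCard.2 ⟨hsub, (Finset.mem_powersetCard.1 hτ).2⟩)

lemma contract_esymm_facet {F : Finset (Fin n)} {d k : ℕ} (hF : F.card = d + 1)
    (hk1 : 1 ≤ k) (hk2 : k ≤ d + 1) :
    contract (esymm (Fin n) K k) (xP F * mV F)
      = (-1 : MvPolynomial (Fin n) K) ^ d *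
          ∑ τ ∈ Finset.univ.powersetCard d, ((bdryCoeff F τ : ℤ) : K) •
            (xP τ * (eS (d + 1 - k) τ * mV τ)) := by
  rw [contract_esymm_xPmV hF hk1 hk2]
  have h1 := (sum_bdry hF (fun τ => (xP τ * (eS (d + 1 - k) τ * mV τ) :
      MvPolynomial (Fin n) K))).trans
    (sum_erase_emb F hF (fun τ => (xP τ * (eS (d + 1 - k) τ * mV τ) : MvPolynomial (Fin n) K)))
  rw [h1, detII F hF (d + 1 - k) (by omega), ← mul_assoc, ← pow_add,
    Even.neg_one_pow (⟨d, rfl⟩ : Even (d + d)), one_mul]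

end Aux

theorem stmt11 (K : Type*) [Field K] (n d s : ℕ)
    (Δ : Finset (Finset (Fin n)))
    (hdown : ∀ σ ∈ Δ, ∀ τ ⊆ σ, τ ∈ Δ)
    (hdim : ∀ σ ∈ Δ, σ.card ≤ d + 1)
    (F : Fin s → Finset (Fin n)) (hFinj : Function.Injective F)
    (hFΔ : ∀ i, F i ∈ Δ) (hFcard : ∀ i, (F i).card = d + 1)
    (hFall : ∀ σ ∈ Δ, σ.card = d + 1 → ∃ i, F i = σ)
    (c : Fin s → K) (hc : c ≠ 0)
    (hcycle : ∀ τ : Finset (Fin n), τ.card = d →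
      ∑ i, c i * ((bdryCoeff (F i) τ : ℤ) : K) = 0) :
    (∀ τ : Finset (Fin n), τ ∉ Δ →
        contract (∏ j ∈ τ, (X j : MvPolynomial (Fin n) K)) (∑ i, c i • xFV (F i)) = 0) ∧
      (∀ k : ℕ, 1 ≤ k → k ≤ d + 1 →
        contract (esymm (Fin n) K k) (∑ i, c i • xFV (F i)) = 0) ∧
      (∑ i, c i • xFV (F i) : MvPolynomial (Fin n) K) ∈ homogeneousSubmodule (Fin n) K ((d + 2).choose 2) ∧
      (∑ i, c i • xFV (F i) : MvPolynomial (Fin n) K) ≠ 0 := by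
  classical
  refine ⟨?_, ?_, ?_, ?_⟩
  · -- Part 1: monomials of the Stanley-Reisner ideal annihilate
    intro τ hτ
    rw [contract_sum_right]
    refine Finset.sum_eq_zero fun i _ => ?_
    rw [contract_smul_right]
    have hxp : (∏ j ∈ τ, (X j : MvPolynomial (Fin n) K)) = monomial (ind τ) 1 :=
      xP_eq_monomial τ
    rw [hxp, contract_monomial, xFV_eq,
      divMonomial_not_subset (fun hsub => hτ (hdown (F i) (hFΔ i) τ hsub)), smul_zero]
  · -- Part 2: elementary symmetric polynomials annihilate
    intro k hk1 hk2
    rw [contract_sum_right]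
    have hstep : ∀ i : Fin s, contract (esymm (Fin n) K k) ((c i • xFV (F i) :
        MvPolynomial (Fin n) K))
        = ∑ τ ∈ Finset.univ.powersetCard d, (-1 : MvPolynomial (Fin n) K) ^ d *
            (c i • (((bdryCoeff (F i) τ : ℤ) : K) • (xP τ * (eS (d + 1 - k) τ * mV τ)))) := by
      intro i
      rw [contract_smul_right, xFV_eq, contract_esymm_facet (hFcard i) hk1 hk2,
        Finset.mul_sum, Finset.smul_sum]
      refine Finset.sum_congr rfl fun τ _ => ?_
      exact (mul_smul_comm (c i) ((-1 : MvPolynomial (Fin n) K) ^ d) _).symm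
    rw [Finset.sum_congr rfl fun i _ => hstep i, Finset.sum_comm]
    refine Finset.sum_eq_zero fun τ hτ => ?_
    rw [← Finset.mul_sum]
    have h0 := hcycle τ (Finset.mem_powersetCard.1 hτ).2
    have hz : ∑ i : Fin s, c i • (((bdryCoeff (F i) τ : ℤ) : K) •
        (xP τ * (eS (d + 1 - k) τ * mV τ) : MvPolynomial (Fin n) K)) = 0 := by
      simp_rw [smul_smul]
      rw [← Finset.sum_smul, h0, zero_smul]
    rw [hz, mul_zero]
  · -- Part 3: homogeneity
    refine Submodule.sum_mem _ fun i _ => Submodule.smul_mem _ _ ?_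
    rw [mem_homogeneousSubmodule, xFV_eq]
    have h2' : (d + 2).choose 2 = (d + 1) + (d + 1).choose 2 := by
      rw [Nat.choose_succ_succ, Nat.choose_one_right]
    rw [h2']
    refine IsHomogeneous.mul ?_ ?_
    · rw [xP]
      have h := IsHomogeneous.prod (F i) (fun j => (X j : MvPolynomial (Fin n) K)) (fun _ => 1)
        (fun j _ => isHomogeneous_X K j)
      simpa [Finset.sum_const, hFcard i] using h
    · rw [mV]
      have hsum : ∑ j ∈ F i, ((F i).filter fun k => j < k).card = (d + 1).choose 2 := by
        rw [sum_emb (F i) (hFcard i)]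
        have h1 : ∀ a : Fin (d + 1),
            (((F i)).filter fun k => (F i).orderEmbOfFin (hFcard i) a < k).card
              = (Finset.Ioi a).card := by
          intro a
          rw [filter_lt_emb (F i) (hFcard i) a,
            Finset.card_image_of_injective _ ((F i).orderEmbOfFin (hFcard i)).injective]
        rw [Finset.sum_congr rfl fun a _ => h1 a]
        exact sum_card_Ioi (d + 1)
      rw [← hsum]
      refine IsHomogeneous.prod _ _ _ fun j _ => ?_
      have h := IsHomogeneous.prod ((F i).filter fun k => j < k)
        (fun k => (X j - X k : MvPolynomial (Fin n) K)) (fun _ => 1)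
        (fun k _ => (isHomogeneous_X K j).sub (isHomogeneous_X K k))
      simpa [Finset.sum_const] using h
  · -- Part 4: nonzero
    obtain ⟨i0, hi0⟩ := Function.ne_iff.1 hc
    have hx : (xFV (F i0) : MvPolynomial (Fin n) K) ≠ 0 := by
      intro h
      have h2 := congrArg (aeval fun j : Fin n => (Polynomial.X : Polynomial K) ^ ((j : ℕ) + 1)) h
      rw [map_zero, xFV_eq, map_mul] at h2
      have hX : ∀ j : Fin n,
          (aeval fun j : Fin n => (Polynomial.X : Polynomial K) ^ ((j : ℕ) + 1))
            (X j : MvPolynomial (Fin n) K) = Polynomial.X ^ ((j : ℕ) + 1) := fun j => aeval_X _ j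
      refine mul_ne_zero ?_ ?_ h2
      · rw [xP, map_prod]
        refine Finset.prod_ne_zero_iff.2 fun j _ => ?_
        rw [hX]
        exact pow_ne_zero _ Polynomial.X_ne_zero
      · rw [mV, map_prod]
        refine Finset.prod_ne_zero_iff.2 fun j _ => ?_
        rw [map_prod]
        refine Finset.prod_ne_zero_iff.2 fun k hk => ?_
        rw [map_sub, hX, hX]
        refine sub_ne_zero.2 fun hEq => ?_
        have hjk : (j : ℕ) + 1 ≠ (k : ℕ) + 1 := by
          have hlt := (Finset.mem_filter.1 hk).2
          have : (j : ℕ) < (k : ℕ) := hlt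
          omega
        have h3 := congrArg (fun p => Polynomial.coeff p ((j : ℕ) + 1)) hEq
        simp only [Polynomial.coeff_X_pow] at h3
        rw [if_pos trivial, if_neg hjk] at h3
        exact one_ne_zero h3
    obtain ⟨m, hm⟩ := ne_zero_iff.1 hx
    intro hzero
    have hm' : coeff m (xP (F i0) * mV (F i0) : MvPolynomial (Fin n) K) ≠ 0 := hm
    have honly : ∀ i : Fin s, i ≠ i0 → coeff m (xFV (F i) : MvPolynomial (Fin n) K) = 0 := by
      intro i hne
      by_contra hcm
      have hcm' : coeff m (xP (F i) * mV (F i) : MvPolynomial (Fin n) K) ≠ 0 := hcm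
      have hFF : F i = F i0 := by
        ext v
        exact (support_xPmV hcm' v).trans (support_xPmV hm' v).symm
      exact hne (hFinj hFF)
    have hco : coeff m (∑ i, c i • xFV (F i) : MvPolynomial (Fin n) K)
        = c i0 * coeff m (xFV (F i0)) := by
      rw [coeff_sum]
      rw [Finset.sum_eq_single i0
        (fun i _ hne => by rw [coeff_smul, honly i hne, smul_zero])
        (fun h => absurd (Finset.mem_univ i0) h)]
      rw [coeff_smul, smul_eq_mul]
    rw [hzero, coeff_zero] at hco
    exact mul_ne_zero hi0 hm hco.symm
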